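/- arXiv:1901.03600 — 6 statements merged into one kernel-verified Lean document; each statement's English description precedes it below -/
import Mathlib

section
/- In the group G₁, the following equality holds: (x₂⁻¹·u)·x₁⁻¹·(x₂⁻¹·u)⁻¹ = x₄⁻¹·x₄⁻¹·x₂. (This is the verification that the substitution xᵢ ↦ xᵢ⁻¹, u ↦ x₂⁻¹u preserves the first defining relation of G₁.) -/
/-- Relator words for the presentation of `G₁`: generators are indexed by `Fin 5`,
with `0,1,2,3` corresponding to `x₁,x₂,x₃,x₄` and `4` to `u`.  The relations are
`u·xᵢ·u⁻¹ = wᵢ` written as relators `(u·xᵢ·u⁻¹)·wᵢ⁻¹`. -/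
def G1rels : Set (FreeGroup (Fin 5)) :=
  {(FreeGroup.of 4 * FreeGroup.of 0 * (FreeGroup.of 4)⁻¹) *
      (FreeGroup.of 3 * FreeGroup.of 3 * (FreeGroup.of 1)⁻¹)⁻¹,
   (FreeGroup.of 4 * FreeGroup.of 1 * (FreeGroup.of 4)⁻¹) *
      (FreeGroup.of 1 * (FreeGroup.of 3)⁻¹ * FreeGroup.of 1 * FreeGroup.of 2 *
        FreeGroup.of 1 * (FreeGroup.of 3)⁻¹)⁻¹,
   (FreeGroup.of 4 * FreeGroup.of 2 * (FreeGroup.of 4)⁻¹) *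
      (FreeGroup.of 3 * (FreeGroup.of 1)⁻¹)⁻¹,
   (FreeGroup.of 4 * FreeGroup.of 3 * (FreeGroup.of 4)⁻¹) *
      (FreeGroup.of 3 * (FreeGroup.of 0)⁻¹ * FreeGroup.of 3 * (FreeGroup.of 1)⁻¹)⁻¹}

/-- The group `G₁ = ⟨x₁,x₂,x₃,x₄,u ∣ u·x₁·u⁻¹ = x₄·x₄·x₂⁻¹,
`u·x₂·u⁻¹ = x₂·x₄⁻¹·x₂·x₃·x₂·x₄⁻¹`, `u·x₃·u⁻¹ = x₄·x₂⁻¹`,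
`u·x₄·u⁻¹ = x₄·x₁⁻¹·x₄·x₂⁻¹⟩`. -/
abbrev G₁ : Type := PresentedGroup G1rels

def x₁ : G₁ := PresentedGroup.of 0
def x₂ : G₁ := PresentedGroup.of 1
def x₃ : G₁ := PresentedGroup.of 2
def x₄ : G₁ := PresentedGroup.of 3
def u : G₁ := PresentedGroup.of 4

lemma G1rel1 : u * x₁ * u⁻¹ = x₄ * x₄ * x₂⁻¹ := by
  have hmem : (FreeGroup.of 4 * FreeGroup.of 0 * (FreeGroup.of 4)⁻¹) *
      (FreeGroup.of 3 * FreeGroup.of 3 * (FreeGroup.of 1)⁻¹)⁻¹ ∈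
      Subgroup.normalClosure G1rels :=
    Subgroup.subset_normalClosure (by left; rfl)
  have h : ((QuotientGroup.mk ((FreeGroup.of 4 * FreeGroup.of 0 * (FreeGroup.of 4)⁻¹) *
      (FreeGroup.of 3 * FreeGroup.of 3 * (FreeGroup.of 1)⁻¹)⁻¹ : FreeGroup (Fin 5)) : G₁)) = 1 :=
    (QuotientGroup.eq_one_iff _).mpr hmem
  have h2 : (u * x₁ * u⁻¹) * (x₄ * x₄ * x₂⁻¹)⁻¹ = 1 := by
    simpa [u, x₁, x₂, x₄, PresentedGroup.of, QuotientGroup.mk_mul, QuotientGroup.mk_inv] using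
      (show PresentedGroup.mk G1rels ((FreeGroup.of 4 * FreeGroup.of 0 * (FreeGroup.of 4)⁻¹) *
        (FreeGroup.of 3 * FreeGroup.of 3 * (FreeGroup.of 1)⁻¹)⁻¹) = 1 from h)
  group at h2 ⊢
  exact mul_inv_eq_one.mp (by simpa [mul_assoc, sq] using h2)

/-- The substitution xᵢ ↦ xᵢ⁻¹, u ↦ x₂⁻¹·u preserves a defining relation of G₁. -/
theorem G1_substitution_preserves_rel1 :
    (x₂⁻¹ * u) * x₁⁻¹ * (x₂⁻¹ * u)⁻¹ = x₄⁻¹ * x₄⁻¹ * x₂ := by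
  have h : u * x₁⁻¹ * u⁻¹ = x₂ * x₄⁻¹ * x₄⁻¹ := by
    calc u * x₁⁻¹ * u⁻¹ = (u * x₁ * u⁻¹)⁻¹ := by group
    _ = (x₄ * x₄ * x₂⁻¹)⁻¹ := by rw [G1rel1]
    _ = x₂ * x₄⁻¹ * x₄⁻¹ := by group
  calc (x₂⁻¹ * u) * x₁⁻¹ * (x₂⁻¹ * u)⁻¹ = x₂⁻¹ * (u * x₁⁻¹ * u⁻¹) * x₂ := by group
  _ = x₂⁻¹ * (x₂ * x₄⁻¹ * x₄⁻¹) * x₂ := by rw [h]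
  _ = x₄⁻¹ * x₄⁻¹ * x₂ := by group
end

section
/- In the group G₁, the following equality holds: (x₂⁻¹·u)·x₂⁻¹·(x₂⁻¹·u)⁻¹ = x₂⁻¹·x₄·x₂⁻¹·x₃⁻¹·x₂⁻¹·x₄. (This is the verification that the substitution xᵢ ↦ xᵢ⁻¹, u ↦ x₂⁻¹u preserves the second defining relation of G₁.) -/

lemma rel2 : u * x₂ * u⁻¹ = x₂ * x₄⁻¹ * x₂ * x₃ * x₂ * x₄⁻¹ := by
  have hr : ((FreeGroup.of 4 * FreeGroup.of 1 * (FreeGroup.of 4)⁻¹) *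
      (FreeGroup.of 1 * (FreeGroup.of 3)⁻¹ * FreeGroup.of 1 * FreeGroup.of 2 *
        FreeGroup.of 1 * (FreeGroup.of 3)⁻¹)⁻¹ : FreeGroup (Fin 5)) ∈ G1rels := by
    simp [G1rels]
  have h1 : (QuotientGroup.mk ((FreeGroup.of 4 * FreeGroup.of 1 * (FreeGroup.of 4)⁻¹) *
      (FreeGroup.of 1 * (FreeGroup.of 3)⁻¹ * FreeGroup.of 1 * FreeGroup.of 2 *
        FreeGroup.of 1 * (FreeGroup.of 3)⁻¹)⁻¹ : FreeGroup (Fin 5)) : PresentedGroup G1rels) = 1 := by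
    rw [QuotientGroup.eq_one_iff]
    exact Subgroup.subset_normalClosure hr
  have h2 : u * x₂ * u⁻¹ * (x₂ * x₄⁻¹ * x₂ * x₃ * x₂ * x₄⁻¹)⁻¹ = 1 := by
    simp [x₂, x₃, x₄, u, PresentedGroup.of, QuotientGroup.mk_mul, QuotientGroup.mk_inv,
      mul_assoc] at h1 ⊢
    exact h1
  have := mul_eq_one_iff_eq_inv.mp h2
  group at this ⊢
  simpa [mul_assoc] using this

/-- The substitution xᵢ ↦ xᵢ⁻¹, u ↦ x₂⁻¹·u preserves a defining relation of G₁. -/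
theorem G1_substitution_preserves_rel2 :
    (x₂⁻¹ * u) * x₂⁻¹ * (x₂⁻¹ * u)⁻¹ = x₂⁻¹ * x₄ * x₂⁻¹ * x₃⁻¹ * x₂⁻¹ * x₄ := by
  have h : u * x₂⁻¹ * u⁻¹ = x₄ * x₂⁻¹ * x₃⁻¹ * x₂⁻¹ * x₄ * x₂⁻¹ := by
    have := congrArg (·⁻¹) rel2
    simp only [mul_inv_rev, inv_inv] at this
    calc u * x₂⁻¹ * u⁻¹ = (u * x₂ * u⁻¹)⁻¹ := by group
    _ = (x₂ * x₄⁻¹ * x₂ * x₃ * x₂ * x₄⁻¹)⁻¹ := by rw [rel2]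
    _ = x₄ * x₂⁻¹ * x₃⁻¹ * x₂⁻¹ * x₄ * x₂⁻¹ := by group
  calc (x₂⁻¹ * u) * x₂⁻¹ * (x₂⁻¹ * u)⁻¹ = x₂⁻¹ * (u * x₂⁻¹ * u⁻¹) * x₂ := by group
  _ = x₂⁻¹ * (x₄ * x₂⁻¹ * x₃⁻¹ * x₂⁻¹ * x₄ * x₂⁻¹) * x₂ := by rw [h]
  _ = x₂⁻¹ * x₄ * x₂⁻¹ * x₃⁻¹ * x₂⁻¹ * x₄ := by group
end

section
/- In the group G₁, the following equality holds: (x₂⁻¹·u)·x₃⁻¹·(x₂⁻¹·u)⁻¹ = x₄⁻¹·x₂. (This is the verification that the substitution xᵢ ↦ xᵢ⁻¹, u ↦ x₂⁻¹u preserves the third defining relation of G₁.) -/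
lemma G1_rel3 : u * x₃ * u⁻¹ = x₄ * x₂⁻¹ := by
  have h : ((QuotientGroup.mk ((FreeGroup.of 4 * FreeGroup.of 2 * (FreeGroup.of 4)⁻¹) *
      (FreeGroup.of 3 * (FreeGroup.of 1)⁻¹)⁻¹ : FreeGroup (Fin 5)) : G₁)) = 1 := by
    rw [QuotientGroup.eq_one_iff]
    apply Subgroup.subset_normalClosure
    simp [G1rels]
  simp only [QuotientGroup.mk_mul, QuotientGroup.mk_inv] at h
  have hu : (QuotientGroup.mk (FreeGroup.of 4 : FreeGroup (Fin 5)) : G₁) = u := rfl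
  have h1 : (QuotientGroup.mk (FreeGroup.of 1 : FreeGroup (Fin 5)) : G₁) = x₂ := rfl
  have h2 : (QuotientGroup.mk (FreeGroup.of 2 : FreeGroup (Fin 5)) : G₁) = x₃ := rfl
  have h3 : (QuotientGroup.mk (FreeGroup.of 3 : FreeGroup (Fin 5)) : G₁) = x₄ := rfl
  rw [hu, h1, h2, h3] at h
  rw [← mul_inv_eq_one]
  group at h ⊢
  exact h

/-- The substitution xᵢ ↦ xᵢ⁻¹, u ↦ x₂⁻¹·u preserves a defining relation of G₁. -/
theorem G1_substitution_preserves_rel3 :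
    (x₂⁻¹ * u) * x₃⁻¹ * (x₂⁻¹ * u)⁻¹ = x₄⁻¹ * x₂ := by
  have h : u * x₃⁻¹ * u⁻¹ = x₂ * x₄⁻¹ := by
    have := G1_rel3
    have h2 : u * x₃⁻¹ * u⁻¹ = (u * x₃ * u⁻¹)⁻¹ := by group
    rw [h2, this]; group
  calc (x₂⁻¹ * u) * x₃⁻¹ * (x₂⁻¹ * u)⁻¹ = x₂⁻¹ * (u * x₃⁻¹ * u⁻¹) * x₂ := by group
    _ = x₂⁻¹ * (x₂ * x₄⁻¹) * x₂ := by rw [h]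
    _ = x₄⁻¹ * x₂ := by group
end

section
/- In the group G₁, the following equality holds: (x₂⁻¹·u)·x₄⁻¹·(x₂⁻¹·u)⁻¹ = x₄⁻¹·x₁·x₄⁻¹·x₂. (This is the verification that the substitution xᵢ ↦ xᵢ⁻¹, u ↦ x₂⁻¹u preserves the fourth defining relation of G₁.) -/
/-- The substitution xᵢ ↦ xᵢ⁻¹, u ↦ x₂⁻¹·u preserves a defining relation of G₁. -/
theorem G1_substitution_preserves_rel4 :
    (x₂⁻¹ * u) * x₄⁻¹ * (x₂⁻¹ * u)⁻¹ = x₄⁻¹ * x₁ * x₄⁻¹ * x₂ := by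
  have h4 : u * x₄ * u⁻¹ = x₄ * x₁⁻¹ * x₄ * x₂⁻¹ := by
    have hmem : (FreeGroup.of 4 * FreeGroup.of 3 * (FreeGroup.of 4)⁻¹) *
        (FreeGroup.of 3 * (FreeGroup.of 0)⁻¹ * FreeGroup.of 3 * (FreeGroup.of 1)⁻¹)⁻¹ ∈ G1rels := by
      simp [G1rels]
    have h1 : ((QuotientGroup.mk ((FreeGroup.of 4 * FreeGroup.of 3 * (FreeGroup.of 4)⁻¹) *
        (FreeGroup.of 3 * (FreeGroup.of 0)⁻¹ * FreeGroup.of 3 * (FreeGroup.of 1)⁻¹)⁻¹)) : G₁) = 1 :=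
      (QuotientGroup.eq_one_iff _).mpr (Subgroup.subset_normalClosure hmem)
    have h2 : u * x₄ * u⁻¹ * (x₄ * x₁⁻¹ * x₄ * x₂⁻¹)⁻¹ = 1 := by
      simp [x₁, x₂, x₄, u, PresentedGroup.of, QuotientGroup.mk_mul, QuotientGroup.mk_inv] at h1 ⊢
      exact h1
    rw [mul_inv_eq_one] at h2
    exact h2
  have hinv : u * x₄⁻¹ * u⁻¹ = x₂ * x₄⁻¹ * x₁ * x₄⁻¹ := by
    have := congrArg (·⁻¹) h4
    simp only [mul_inv_rev, inv_inv] at this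
    calc u * x₄⁻¹ * u⁻¹ = (u * x₄ * u⁻¹)⁻¹ := by group
    _ = (x₄ * x₁⁻¹ * x₄ * x₂⁻¹)⁻¹ := by rw [h4]
    _ = x₂ * x₄⁻¹ * x₁ * x₄⁻¹ := by group
  calc (x₂⁻¹ * u) * x₄⁻¹ * (x₂⁻¹ * u)⁻¹ = x₂⁻¹ * (u * x₄⁻¹ * u⁻¹) * x₂ := by group
  _ = x₂⁻¹ * (x₂ * x₄⁻¹ * x₁ * x₄⁻¹) * x₂ := by rw [hinv]
  _ = x₄⁻¹ * x₁ * x₄⁻¹ * x₂ := by group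
end

section
/- Every group homomorphism φ : G₁ → G₁ satisfying φ(x₁) = x₁⁻¹, φ(x₂) = x₂⁻¹, φ(x₃) = x₃⁻¹, φ(x₄) = x₄⁻¹, and φ(u) = x₂⁻¹·u is an involution, i.e. φ ∘ φ is the identity map of G₁; in particular, φ is an automorphism of G₁. -/
/-- Any endomorphism of `G₁` sending `xᵢ ↦ xᵢ⁻¹` and `u ↦ x₂⁻¹·u` is an involution,
hence an automorphism. -/
theorem G1_hom_is_involution (φ : G₁ →* G₁)
    (h₁ : φ x₁ = x₁⁻¹) (h₂ : φ x₂ = x₂⁻¹) (h₃ : φ x₃ = x₃⁻¹) (h₄ : φ x₄ = x₄⁻¹)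
    (hu : φ u = x₂⁻¹ * u) :
    (∀ g : G₁, φ (φ g) = g) ∧ Function.Bijective φ := by
  have key : φ.comp φ = MonoidHom.id G₁ := by
    apply PresentedGroup.ext
    intro i
    fin_cases i
    · show φ (φ x₁) = x₁; rw [h₁, map_inv, h₁, inv_inv]
    · show φ (φ x₂) = x₂; rw [h₂, map_inv, h₂, inv_inv]
    · show φ (φ x₃) = x₃; rw [h₃, map_inv, h₃, inv_inv]
    · show φ (φ x₄) = x₄; rw [h₄, map_inv, h₄, inv_inv]
    · show φ (φ u) = u
      rw [hu, map_mul, map_inv, h₂, hu, inv_inv, ← mul_assoc, mul_inv_cancel, one_mul]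
  have hinv : ∀ g : G₁, φ (φ g) = g := fun g => congrArg (· g) key ▸ rfl
  refine ⟨hinv, Function.bijective_iff_has_inverse.2 ⟨φ, hinv, hinv⟩⟩
end

section
/- Let w = x₁·x₂·x₃·x₄·x₁⁻¹·x₂⁻¹·x₃⁻¹·x₄⁻¹ in G₁, and let φ : G₁ → G₁ be a group homomorphism satisfying φ(xᵢ) = xᵢ⁻¹ for i = 1, 2, 3, 4 and φ(u) = x₂⁻¹·u. Then φ(w) is conjugate to w in G₁; more precisely, φ(w) = (x₁·x₂·x₃·x₄)⁻¹·w·(x₁·x₂·x₃·x₄). (That is, the automorphism preserves the conjugacy class of the element representing the boundary of the genus-two Seifert surface.) -/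
/-- The automorphism `xᵢ ↦ xᵢ⁻¹`, `u ↦ x₂⁻¹·u` of `G₁` sends the boundary word
`w = x₁·x₂·x₃·x₄·x₁⁻¹·x₂⁻¹·x₃⁻¹·x₄⁻¹` to the conjugate
`(x₁·x₂·x₃·x₄)⁻¹·w·(x₁·x₂·x₃·x₄)`; in particular `φ w` is conjugate to `w`. -/
theorem G1_hom_preserves_boundary_conjugacy (φ : G₁ →* G₁)
    (h₁ : φ x₁ = x₁⁻¹) (h₂ : φ x₂ = x₂⁻¹) (h₃ : φ x₃ = x₃⁻¹) (h₄ : φ x₄ = x₄⁻¹)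
    (hu : φ u = x₂⁻¹ * u) :
    φ (x₁ * x₂ * x₃ * x₄ * x₁⁻¹ * x₂⁻¹ * x₃⁻¹ * x₄⁻¹) =
      (x₁ * x₂ * x₃ * x₄)⁻¹ * (x₁ * x₂ * x₃ * x₄ * x₁⁻¹ * x₂⁻¹ * x₃⁻¹ * x₄⁻¹) *
        (x₁ * x₂ * x₃ * x₄) ∧
    IsConj (x₁ * x₂ * x₃ * x₄ * x₁⁻¹ * x₂⁻¹ * x₃⁻¹ * x₄⁻¹)
      (φ (x₁ * x₂ * x₃ * x₄ * x₁⁻¹ * x₂⁻¹ * x₃⁻¹ * x₄⁻¹)) := by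
  have key : φ (x₁ * x₂ * x₃ * x₄ * x₁⁻¹ * x₂⁻¹ * x₃⁻¹ * x₄⁻¹) =
      (x₁ * x₂ * x₃ * x₄)⁻¹ * (x₁ * x₂ * x₃ * x₄ * x₁⁻¹ * x₂⁻¹ * x₃⁻¹ * x₄⁻¹) *
        (x₁ * x₂ * x₃ * x₄) := by
    simp only [map_mul, map_inv, h₁, h₂, h₃, h₄]
    group
  refine ⟨key, ?_⟩
  rw [key, isConj_iff]
  exact ⟨(x₁ * x₂ * x₃ * x₄)⁻¹, by group⟩
end
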